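/- There is a constant C > 1 such that the following holds for every real δ ∈ (0,1/2) and all integers n and k with k ≥ 2 and n ≥ C·δ⁻³·k². If 𝓕 ⊆ 2^[n] is a family with w_k(𝓕) ≥ 1 + r·C(n,⌊n/2⌋)⁻¹ for some real number r, then the number of comparable pairs in 𝓕 is at least (1/2 - δ)·r·n. -/

import Mathlib

/-- An `(r,k)`-colouring of a family `F` of subsets of `[n]`: an assignment of one of `r`
colours to each member of `F` such that no `k`-chain in `F` is monochromatic. -/
def IsRKColouring {n r : ℕ} (k : ℕ) (F : Finset (Finset (Fin n)))
    (c : {A // A ∈ F} → Fin r) : Prop :=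
  ∀ ch : Fin k → {A // A ∈ F},
    (∀ i j : Fin k, i < j → (ch i : Finset (Fin n)) ⊂ (ch j : Finset (Fin n))) →
    ∃ i j : Fin k, c (ch i) ≠ c (ch j)

/-- The number of `(r,k)`-colourings of the family `F ⊆ 2^[n]`. -/
noncomputable def numColourings (r k n : ℕ) (F : Finset (Finset (Fin n))) : ℕ :=
  Nat.card {c : {A // A ∈ F} → Fin r // IsRKColouring k F c}

/-- `F` contains no `k`-chain. -/
def kChainFree (k : ℕ) {n : ℕ} (F : Finset (Finset (Fin n))) : Prop :=
  ¬ ∃ ch : Fin k → Finset (Fin n), (∀ i, ch i ∈ F) ∧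
      ∀ i j : Fin k, i < j → ch i ⊂ ch j

/-- `m_{k-1}`, the size of the family of all subsets of `[n]` of size between
`⌊(n-k+2)/2⌋` and `⌊(n+k-2)/2⌋`. -/
def mSize (n k : ℕ) : ℕ := ∑ i ∈ Finset.Icc ((n - k + 2) / 2) ((n + k - 2) / 2), n.choose i

/-- `f(r,k;n)`: the maximum number of `(r,k)`-colourings over all families in `2^[n]`. -/
noncomputable def fMax (r k n : ℕ) : ℕ :=
  Finset.sup Finset.univ (fun F : Finset (Finset (Fin n)) => numColourings r k n F)

/-- The number of comparable pairs in a family. -/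
def cpairs {n : ℕ} (F : Finset (Finset (Fin n))) : ℕ :=
  ((F ×ˢ F).filter fun p => p.1 ⊂ p.2).card

/-- The weight `w_k(F)` of a set `F ⊆ [n]`. -/
noncomputable def wk (n k : ℕ) (F : Finset (Fin n)) : ℝ :=
  min ((n.choose F.card : ℝ))⁻¹ ((n.choose ((n - k) / 2) : ℝ))⁻¹

/-- The weight `w_k(𝓕)` of a family `𝓕 ⊆ 2^[n]`. -/
noncomputable def wkFam (n k : ℕ) (F : Finset (Finset (Fin n))) : ℝ :=
  ∑ A ∈ F, wk n k A



section SupersatAux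
open Finset Equiv

/-- There is a permutation mapping any finset onto any other of the same card. -/
lemma exists_perm_image {α : Type*} [Fintype α] [DecidableEq α] (s t : Finset α) (h : s.card = t.card) :
    ∃ π : Equiv.Perm α, s.image π = t := by
  have hc : Fintype.card s = Fintype.card t := by simpa using h
  have hcc : Fintype.card {x // ¬ x ∈ s} = Fintype.card {x // ¬ x ∈ t} := by
    simp only [Fintype.card_subtype]
    rw [Finset.filter_not, Finset.filter_not]
    simp only [Finset.filter_mem_eq_inter, Finset.univ_inter]
    rw [Finset.card_sdiff_of_subset (Finset.subset_univ _), Finset.card_sdiff_of_subset (Finset.subset_univ _), h]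
  have e₁ : {x // x ∈ s} ≃ {x // x ∈ t} := Fintype.equivOfCardEq hc
  have e₂ : {x // ¬ x ∈ s} ≃ {x // ¬ x ∈ t} := Fintype.equivOfCardEq hcc
  refine ⟨(Equiv.sumCompl (· ∈ s)).symm.trans ((e₁.sumCongr e₂).trans (Equiv.sumCompl (· ∈ t))), ?_⟩
  have hsub : s.image ((Equiv.sumCompl (· ∈ s)).symm.trans ((e₁.sumCongr e₂).trans (Equiv.sumCompl (· ∈ t)))) ⊆ t := by
    intro y hy
    simp only [Finset.mem_image] at hy
    obtain ⟨x, hx, rfl⟩ := hy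
    simp only [Equiv.trans_apply, Equiv.sumCompl_symm_apply_of_pos hx, Equiv.sumCongr_apply,
      Sum.map_inl, Equiv.sumCompl_apply_inl]
    exact (e₁ ⟨x, hx⟩).2
  refine Finset.eq_of_subset_of_card_le hsub ?_
  rw [Finset.card_image_of_injective _ (Equiv.injective _), h]

/-- Flag transitivity. -/
lemma exists_perm_image_flag {α : Type*} [Fintype α] [DecidableEq α] (A B A' B' : Finset α) (hAB : A ⊆ B) (hAB' : A' ⊆ B')
    (ha : A.card = A'.card) (hb : B.card = B'.card) :
    ∃ π : Equiv.Perm α, A.image π = A' ∧ B.image π = B' := by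
  obtain ⟨g₁, hg₁⟩ := exists_perm_image B B' hb
  set A₁ : Finset α := A.image g₁ with hA₁def
  have hA₁B' : A₁ ⊆ B' := by
    rw [← hg₁]; exact Finset.image_subset_image hAB
  have hA₁card : A₁.card = A'.card := by
    rw [hA₁def, Finset.card_image_of_injective _ (Equiv.injective _), ha]
  -- perm inside B'
  have hsubcard : (A₁.subtype (· ∈ B')).card = (A'.subtype (· ∈ B')).card := by
    rw [Finset.card_subtype, Finset.card_subtype, Finset.filter_true_of_mem (fun x hx => hA₁B' hx),
      Finset.filter_true_of_mem (fun x hx => hAB' hx), hA₁card]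
  obtain ⟨τ, hτ⟩ := exists_perm_image (A₁.subtype (· ∈ B')) (A'.subtype (· ∈ B')) hsubcard
  set g₂ : Equiv.Perm α := Equiv.Perm.ofSubtype τ with hg₂def
  have hg₂B' : ∀ x ∈ B', g₂ x ∈ B' := by
    intro x hx
    rw [hg₂def, Equiv.Perm.ofSubtype_apply_of_mem τ hx]
    exact (τ ⟨x, hx⟩).2
  have himgB' : B'.image g₂ = B' := by
    refine Finset.eq_of_subset_of_card_le ?_ ?_
    · intro y hy; obtain ⟨x, hx, rfl⟩ := Finset.mem_image.mp hy; exact hg₂B' x hx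
    · rw [Finset.card_image_of_injective _ (Equiv.injective _)]
  have himgA' : A₁.image g₂ = A' := by
    refine Finset.eq_of_subset_of_card_le ?_ ?_
    · intro y hy
      obtain ⟨x, hx, rfl⟩ := Finset.mem_image.mp hy
      have hxB' : x ∈ B' := hA₁B' hx
      rw [hg₂def, Equiv.Perm.ofSubtype_apply_of_mem τ hxB']
      have : (⟨x, hxB'⟩ : {y // y ∈ B'}) ∈ A₁.subtype (· ∈ B') := by
        simp [Finset.mem_subtype, hx]
      have := hτ ▸ Finset.mem_image_of_mem τ this
      exact (Finset.mem_subtype.mp this)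
    · rw [Finset.card_image_of_injective _ (Equiv.injective _), hA₁card]
  refine ⟨g₁.trans g₂, ?_, ?_⟩
  · rw [← himgA', hA₁def, Finset.image_image]; rfl
  · rw [← himgB', ← hg₁, Finset.image_image]; rfl

/-- Fibers of an equivariant-ish map with transitive symmetry all have the same size. -/
lemma fiber_card_mul {G β : Type*} [Fintype G] [DecidableEq β] (f : G → β) (T : Finset β)
    (h1 : ∀ σ, f σ ∈ T)
    (h2 : ∀ x ∈ T, ∀ y ∈ T, ∃ π : G ≃ G, ∀ σ, f (π σ) = y ↔ f σ = x) :
    ∀ x ∈ T, (Finset.univ.filter (fun σ => f σ = x)).card * T.card = Fintype.card G := by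
  intro x hx
  have hconst : ∀ y ∈ T, (Finset.univ.filter (fun σ => f σ = y)).card
      = (Finset.univ.filter (fun σ => f σ = x)).card := by
    intro y hy
    obtain ⟨π, hπ⟩ := h2 x hx y hy
    refine (Finset.card_bij (fun σ _ => π σ) ?_ ?_ ?_).symm
    · intro σ hσ
      simp only [Finset.mem_filter, Finset.mem_univ, true_and] at hσ ⊢
      exact (hπ σ).mpr hσ
    · intro a _ b _ hab; exact π.injective hab
    · intro τ hτ
      simp only [Finset.mem_filter, Finset.mem_univ, true_and] at hτ ⊢
      refine ⟨π.symm τ, ?_, by simp⟩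
      have := (hπ (π.symm τ)).mp (by simpa using hτ)
      exact this
  have := Finset.card_eq_sum_card_fiberwise (fun σ (_ : σ ∈ (Finset.univ : Finset G)) => h1 σ)
  rw [Finset.card_univ] at this
  rw [this, Finset.sum_congr rfl hconst, Finset.sum_const, smul_eq_mul, mul_comm]

def Iseg (n i : ℕ) : Finset (Fin n) := Finset.univ.filter (fun x => (x : ℕ) < i)

lemma card_Iseg {n i : ℕ} (h : i ≤ n) : (Iseg n i).card = i := by
  have : Iseg n i = (Finset.univ : Finset (Fin i)).image (Fin.castLE h) := by
    ext x
    simp only [Iseg, Finset.mem_filter, Finset.mem_univ, true_and, Finset.mem_image]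
    constructor
    · intro hx; exact ⟨⟨x, hx⟩, rfl⟩
    · rintro ⟨y, _, rfl⟩; exact y.2
  rw [this, Finset.card_image_of_injective _ (Fin.castLE_injective h)]
  simp

lemma Iseg_subset (n : ℕ) {i j : ℕ} (h : i ≤ j) : Iseg n i ⊆ Iseg n j := by
  intro x; simp only [Iseg, Finset.mem_filter]; exact fun ⟨h1, h2⟩ => ⟨h1, h2.trans_le h⟩

lemma count_one {n : ℕ} (A : Finset (Fin n)) :
    ((Finset.univ.filter (fun σ : Equiv.Perm (Fin n) => (Iseg n A.card).image σ = A)).card)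
      * n.choose A.card = n.factorial := by
  have han : A.card ≤ n := by simpa using A.card_le_univ
  have key := fiber_card_mul (fun σ : Equiv.Perm (Fin n) => (Iseg n A.card).image σ)
    (Finset.powersetCard A.card Finset.univ)
    (fun σ => by
      rw [Finset.mem_powersetCard_univ, Finset.card_image_of_injective _ σ.injective,
        card_Iseg han])
    (fun x hx y hy => by
      rw [Finset.mem_powersetCard_univ] at hx hy
      obtain ⟨g, hg⟩ := exists_perm_image x y (hx.trans hy.symm)
      refine ⟨Equiv.mulLeft g, fun σ => ?_⟩
      show (Iseg n A.card).image ⇑(g * σ) = y ↔ (Iseg n A.card).image ⇑σ = x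
      have : (Iseg n A.card).image ⇑(g * σ) = ((Iseg n A.card).image σ).image g := by
        rw [Finset.image_image]; rfl
      rw [this]
      constructor
      · intro h
        have : ((Iseg n A.card).image σ).image g = x.image g := by rw [h, hg]
        exact Finset.image_injective g.injective this
      · intro h; rw [h, hg])
    A (by rw [Finset.mem_powersetCard_univ])
  rw [Finset.card_powersetCard, Finset.card_univ, Fintype.card_fin] at key
  rw [key, Fintype.card_perm, Fintype.card_fin]

lemma count_two {n : ℕ} (A B : Finset (Fin n)) (hAB : A ⊆ B) :
    ((Finset.univ.filter (fun σ : Equiv.Perm (Fin n) =>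
        (Iseg n A.card).image σ = A ∧ (Iseg n B.card).image σ = B)).card)
      * (n.choose B.card * B.card.choose A.card) = n.factorial := by
  set a := A.card; set b := B.card
  have hab : a ≤ b := Finset.card_le_card hAB
  have hbn : b ≤ n := by simpa using B.card_le_univ
  set T : Finset (Finset (Fin n) × Finset (Fin n)) :=
    Finset.univ.filter (fun p => p.1.card = a ∧ p.2.card = b ∧ p.1 ⊆ p.2) with hT
  have hTmem : ∀ p : Finset (Fin n) × Finset (Fin n),
      p ∈ T ↔ p.1.card = a ∧ p.2.card = b ∧ p.1 ⊆ p.2 := by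
    intro p; simp [hT]
  have key := fiber_card_mul
    (fun σ : Equiv.Perm (Fin n) => ((Iseg n a).image σ, (Iseg n b).image σ)) T
    (fun σ => by
      rw [hTmem]
      refine ⟨?_, ?_, Finset.image_subset_image (Iseg_subset n hab)⟩
      · rw [Finset.card_image_of_injective _ σ.injective, card_Iseg (hab.trans hbn)]
      · rw [Finset.card_image_of_injective _ σ.injective, card_Iseg hbn])
    (fun x hx y hy => by
      rw [hTmem] at hx hy
      obtain ⟨g, hg1, hg2⟩ := exists_perm_image_flag x.1 x.2 y.1 y.2 hx.2.2 hy.2.2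
        (hx.1.trans hy.1.symm) (hx.2.1.trans hy.2.1.symm)
      refine ⟨Equiv.mulLeft g, fun σ => ?_⟩
      show ((Iseg n a).image ⇑(g * σ), (Iseg n b).image ⇑(g * σ)) = y
        ↔ ((Iseg n a).image ⇑σ, (Iseg n b).image ⇑σ) = x
      have e1 : (Iseg n a).image ⇑(g * σ) = ((Iseg n a).image σ).image g := by
        rw [Finset.image_image]; rfl
      have e2 : (Iseg n b).image ⇑(g * σ) = ((Iseg n b).image σ).image g := by
        rw [Finset.image_image]; rfl
      rw [Prod.ext_iff, Prod.ext_iff, e1, e2]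
      simp only [Prod.fst, Prod.snd]
      constructor
      · rintro ⟨h1, h2⟩
        constructor
        · exact Finset.image_injective g.injective (by rw [h1, hg1])
        · exact Finset.image_injective g.injective (by rw [h2, hg2])
      · rintro ⟨h1, h2⟩; rw [h1, h2, hg1, hg2]; exact ⟨rfl, rfl⟩)
    (A, B) (by rw [hTmem]; exact ⟨rfl, rfl, hAB⟩)
  have hTcard : T.card = n.choose b * b.choose a := by
    have hfib : ∀ p ∈ T, p.2 ∈ Finset.powersetCard b (Finset.univ : Finset (Fin n)) := by
      intro p hp; rw [hTmem] at hp; rw [Finset.mem_powersetCard_univ]; exact hp.2.1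
    rw [Finset.card_eq_sum_card_fiberwise hfib]
    have : ∀ B' ∈ Finset.powersetCard b (Finset.univ : Finset (Fin n)),
        (T.filter (fun p => p.2 = B')).card = b.choose a := by
      intro B' hB'
      rw [Finset.mem_powersetCard_univ] at hB'
      rw [← hB']
      rw [← Finset.card_powersetCard a B']
      refine Finset.card_bij (fun p _ => p.1) ?_ ?_ ?_
      · intro p hp
        simp only [Finset.mem_filter, hTmem] at hp
        rw [Finset.mem_powersetCard]
        exact ⟨hp.2 ▸ hp.1.2.2, hp.1.1⟩
      · intro p hp q hq h
        simp only [Finset.mem_filter] at hp hq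
        exact Prod.ext h (hp.2.trans hq.2.symm)
      · intro A' hA'
        rw [Finset.mem_powersetCard] at hA'
        exact ⟨(A', B'), by simp [Finset.mem_filter, hTmem, hA'.1, hA'.2, hB'], rfl⟩
    rw [Finset.sum_congr rfl this, Finset.sum_const, Finset.card_powersetCard,
      Finset.card_univ, Fintype.card_fin, smul_eq_mul]
  simp only [Prod.mk.injEq] at key
  rw [hTcard] at key
  rw [key, Fintype.card_perm, Fintype.card_fin]

abbrev onChain {n : ℕ} (σ : Equiv.Perm (Fin n)) (A : Finset (Fin n)) : Prop :=
  (Iseg n A.card).image σ = A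

/-- `C(m,j) ≥ m` for `1 ≤ j < m`. -/
lemma le_choose : ∀ (m j : ℕ), 1 ≤ j → j < m → m ≤ m.choose j := by
  intro m
  induction m with
  | zero => intro j h1 h2; omega
  | succ m ih =>
    intro j h1 h2
    rcases eq_or_lt_of_le (Nat.le_of_lt_succ h2) with hj | hj
    · subst hj; rw [Nat.choose_succ_self_right]
    · rcases j with _ | j'
      · omega
      rw [Nat.choose_succ_succ]
      have h3 : m ≤ m.choose (j' + 1) := ih (j' + 1) (by omega) hj
      have h4 : 1 ≤ m.choose j' := Nat.choose_pos (by omega)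
      simp only [Nat.succ_eq_add_one]
      omega

/-- Upper Bernoulli: `(1+x)^j ≤ 1 + 2jx` when `2jx ≤ 1`, `x ≥ 0`. -/
lemma pow_one_add_le (x : ℝ) (hx : 0 ≤ x) : ∀ j : ℕ, 2 * j * x ≤ 1 →
    (1 + x) ^ j ≤ 1 + 2 * j * x := by
  intro j
  induction j with
  | zero => simp
  | succ j ih =>
    intro h
    have hj : 2 * (j:ℝ) * x ≤ 1 := by
      refine le_trans ?_ h
      have : (j:ℝ) ≤ (j+1:ℕ) := by push_cast; linarith
      nlinarith
    have h1 := ih hj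
    have h2 : (1 + x) ^ (j + 1) = (1 + x) ^ j * (1 + x) := by ring
    have h3 : (1 + x) ^ j * (1 + x) ≤ (1 + 2 * j * x) * (1 + x) := by
      have : (0:ℝ) ≤ 1 + x := by linarith
      nlinarith [pow_nonneg (by linarith : (0:ℝ) ≤ 1 + x) j]
    push_cast
    nlinarith

/-- Ratio step for binomials above `m = (n-k)/2`. -/
lemma choose_ratio_step (n k i : ℕ) (hk : k ≤ n) (hi : (n - k) / 2 ≤ i) :
    n.choose (i + 1) * (n - k + 1) ≤ n.choose i * (n + k + 1) := by
  rcases le_or_gt (i+1) n with hin | hin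
  · have key := Nat.choose_succ_right_eq n i
    have h1 : n - k + 1 ≤ 2 * (i + 1) := by omega
    have h2 : 2 * (n - i) ≤ n + k + 1 := by omega
    calc n.choose (i+1) * (n - k + 1) ≤ n.choose (i+1) * (2 * (i+1)) :=
          Nat.mul_le_mul_left _ h1
      _ = 2 * (n.choose (i+1) * (i+1)) := by ring
      _ = 2 * (n.choose i * (n - i)) := by rw [key]
      _ = n.choose i * (2 * (n - i)) := by ring
      _ ≤ n.choose i * (n + k + 1) := Nat.mul_le_mul_left _ h2
  · rw [Nat.choose_eq_zero_of_lt hin]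
    simp

lemma choose_ratio_pow (n k : ℕ) (hk : k ≤ n) : ∀ j : ℕ,
    n.choose ((n - k) / 2 + j) * (n - k + 1) ^ j ≤ n.choose ((n - k) / 2) * (n + k + 1) ^ j := by
  intro j
  induction j with
  | zero => simp
  | succ j ih =>
    have step := choose_ratio_step n k ((n-k)/2 + j) hk (Nat.le_add_right _ _)
    calc n.choose ((n-k)/2 + (j+1)) * (n-k+1)^(j+1)
        = (n.choose ((n-k)/2 + j + 1) * (n-k+1)) * (n-k+1)^j := by
          rw [← Nat.add_assoc]; ring
      _ ≤ (n.choose ((n-k)/2 + j) * (n+k+1)) * (n-k+1)^j := Nat.mul_le_mul_right _ step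
      _ = (n.choose ((n-k)/2 + j) * (n-k+1)^j) * (n+k+1) := by ring
      _ ≤ (n.choose ((n-k)/2) * (n+k+1)^j) * (n+k+1) := Nat.mul_le_mul_right _ ih
      _ = n.choose ((n-k)/2) * (n+k+1)^(j+1) := by ring

noncomputable def capR (n k : ℕ) : ℝ := ((n.choose ((n - k) / 2) : ℝ))⁻¹

noncomputable def tw (n k : ℕ) (A : Finset (Fin n)) : ℝ := (n.choose A.card : ℝ) * wk n k A

section basic
variable {n k : ℕ}

lemma capR_pos (hkn : k ≤ n) : 0 < capR n k := by
  have : 0 < n.choose ((n - k) / 2) := Nat.choose_pos (by omega)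
  exact inv_pos.mpr (by exact_mod_cast this)

lemma choose_card_pos {A : Finset (Fin n)} : 0 < (n.choose A.card : ℝ) := by
  have h : A.card ≤ n := by simpa using A.card_le_univ
  exact_mod_cast Nat.choose_pos h

lemma tw_eq (A : Finset (Fin n)) : tw n k A = min 1 ((n.choose A.card : ℝ) * capR n k) := by
  rw [tw, wk, capR, mul_min_of_nonneg _ _ (le_of_lt choose_card_pos),
    mul_inv_cancel₀ (ne_of_gt choose_card_pos)]

lemma tw_nonneg (hkn : k ≤ n) (A : Finset (Fin n)) : 0 ≤ tw n k A := by
  rw [tw_eq]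
  exact le_min zero_le_one
    (mul_nonneg (le_of_lt choose_card_pos) (le_of_lt (capR_pos hkn)))

lemma tw_le_one (A : Finset (Fin n)) : tw n k A ≤ 1 := by rw [tw_eq]; exact min_le_left _ _

lemma tw_le_choose_mul (A : Finset (Fin n)) :
    tw n k A ≤ (n.choose A.card : ℝ) * capR n k := by rw [tw_eq]; exact min_le_right _ _

lemma capR_le_tw (hkn : k ≤ n) (hcap1 : capR n k ≤ 1) (A : Finset (Fin n)) :
    capR n k ≤ tw n k A := by
  rw [tw_eq]
  refine le_min hcap1 ?_
  have h1 : (1:ℝ) ≤ (n.choose A.card : ℝ) := by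
    have h : A.card ≤ n := by simpa using A.card_le_univ
    exact_mod_cast Nat.choose_pos h
  nlinarith [capR_pos (n := n) (k := k) hkn]

lemma tw_extreme (hkn : k ≤ n) {A : Finset (Fin n)} (h : A.card = 0 ∨ A.card = n)
    (hcap1 : capR n k ≤ 1) : tw n k A = capR n k := by
  rw [tw_eq]
  rcases h with h | h <;> rw [h] <;>
    simp only [Nat.choose_zero_right, Nat.choose_self, Nat.cast_one, one_mul] <;>
    exact min_eq_right hcap1

lemma chain_nested {σ : Equiv.Perm (Fin n)} {A B : Finset (Fin n)}
    (hA : onChain σ A) (hB : onChain σ B) (hne : A ≠ B) : A ⊂ B ∨ B ⊂ A := by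
  rcases lt_trichotomy A.card B.card with h | h | h
  · left
    refine Finset.ssubset_iff_subset_ne.mpr ⟨?_, hne⟩
    rw [← hA, ← hB]
    exact Finset.image_subset_image (Iseg_subset n h.le)
  · exact absurd (by rw [← hA, ← hB, h]) hne
  · right
    refine Finset.ssubset_iff_subset_ne.mpr ⟨?_, hne.symm⟩
    rw [← hA, ← hB]
    exact Finset.image_subset_image (Iseg_subset n h.le)

end basic

/-- Per-chain inequality. -/
lemma chain_ineq (n k : ℕ) (hkn : k ≤ n) (hn0 : 0 < n) (F : Finset (Finset (Fin n)))
    (σ : Equiv.Perm (Fin n)) (hcap : capR n k ≤ 1/2) :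
    ∑ A ∈ F.filter (fun A => onChain σ A), tw n k A ≤
    1 + ∑ p ∈ (F ×ˢ F).filter (fun p => p.1 ⊂ p.2 ∧ ¬(p.1 = ∅ ∧ p.2 = Finset.univ)
        ∧ onChain σ p.1 ∧ onChain σ p.2), min (tw n k p.1) (tw n k p.2) := by
  have hcap1 : capR n k ≤ 1 := by linarith
  set G := F.filter (fun A => onChain σ A) with hG
  set Pσ := (F ×ˢ F).filter (fun p => p.1 ⊂ p.2 ∧ ¬(p.1 = ∅ ∧ p.2 = Finset.univ)
        ∧ onChain σ p.1 ∧ onChain σ p.2) with hPσ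
  have hpair_nonneg : ∀ p : Finset (Fin n) × Finset (Fin n),
      0 ≤ min (tw n k p.1) (tw n k p.2) :=
    fun p => le_min (tw_nonneg hkn _) (tw_nonneg hkn _)
  have hGsub : ∀ A ∈ G, A ∈ F ∧ onChain σ A := by
    intro A hA; simpa [hG] using (Finset.mem_filter.mp hA)
  set G' := G.filter (fun A => A ≠ ∅ ∧ A ≠ Finset.univ) with hG'
  rcases G'.eq_empty_or_nonempty with hGe | hGne
  · -- G ⊆ {∅, univ}
    have hsub : G ⊆ insert ∅ {(Finset.univ : Finset (Fin n))} := by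
      intro A hA
      by_contra hmem
      simp only [Finset.mem_insert, Finset.mem_singleton] at hmem
      push_neg at hmem
      have : A ∈ G' := Finset.mem_filter.mpr ⟨hA, Finset.nonempty_iff_ne_empty.mp hmem.1, hmem.2⟩
      rw [hGe] at this; exact absurd this (Finset.notMem_empty _)
    have h1 : ∑ A ∈ G, tw n k A ≤ ∑ A ∈ insert ∅ {(Finset.univ : Finset (Fin n))}, tw n k A :=
      Finset.sum_le_sum_of_subset_of_nonneg hsub (fun A _ _ => tw_nonneg hkn A)
    have hne_univ : (∅ : Finset (Fin n)) ≠ Finset.univ := by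
      intro h
      apply_fun Finset.card at h
      simp only [Finset.card_empty, Finset.card_univ, Fintype.card_fin] at h
      omega
    have h2 : ∑ A ∈ insert ∅ {(Finset.univ : Finset (Fin n))}, tw n k A
        = tw n k ∅ + tw n k Finset.univ := by
      rw [Finset.sum_insert (by simpa using hne_univ)]
      simp
    have h3 : tw n k ∅ = capR n k := tw_extreme hkn (Or.inl Finset.card_empty) hcap1
    have h4 : tw n k Finset.univ = capR n k :=
      tw_extreme hkn (Or.inr (by simp)) hcap1
    have h5 : 0 ≤ ∑ p ∈ Pσ, min (tw n k p.1) (tw n k p.2) :=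
      Finset.sum_nonneg (fun p _ => hpair_nonneg p)
    calc ∑ A ∈ G, tw n k A ≤ tw n k ∅ + tw n k Finset.univ := h1.trans_eq h2
      _ ≤ 1 := by rw [h3, h4]; linarith
      _ ≤ 1 + ∑ p ∈ Pσ, min (tw n k p.1) (tw n k p.2) := by linarith
  · -- nonempty case
    obtain ⟨A₀, hA₀G', hA₀max⟩ := Finset.exists_max_image G' (tw n k) hGne
    have hA₀G : A₀ ∈ G := (Finset.mem_filter.mp hA₀G').1
    have hA₀props := (Finset.mem_filter.mp hA₀G').2
    have hA₀F : A₀ ∈ F := (hGsub A₀ hA₀G).1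
    have hA₀chain : onChain σ A₀ := (hGsub A₀ hA₀G).2
    have hmax : ∀ A ∈ G, tw n k A ≤ tw n k A₀ := by
      intro A hA
      by_cases hA' : A ∈ G'
      · exact hA₀max A hA'
      · have : A = ∅ ∨ A = Finset.univ := by
          rw [hG', Finset.mem_filter] at hA'
          push_neg at hA'
          rcases Classical.em (A = ∅) with h | h
          · exact Or.inl h
          · exact Or.inr (hA' hA (Finset.nonempty_iff_ne_empty.mpr h))
        have hAext : tw n k A = capR n k := by
          rcases this with h | h <;> subst h
          · exact tw_extreme hkn (Or.inl Finset.card_empty) hcap1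
          · exact tw_extreme hkn (Or.inr (by simp)) hcap1
        rw [hAext]
        exact capR_le_tw hkn hcap1 A₀
    rw [← Finset.add_sum_erase G _ hA₀G]
    have htwA₀ : tw n k A₀ ≤ 1 := tw_le_one A₀
    -- the injection into pairs
    set i : Finset (Fin n) → Finset (Fin n) × Finset (Fin n) :=
      fun A => if A ⊂ A₀ then (A, A₀) else (A₀, A) with hi
    have hkey : ∀ A ∈ G.erase A₀, i A ∈ Pσ ∧ min (tw n k (i A).1) (tw n k (i A).2) = tw n k A := by
      intro A hA
      obtain ⟨hAne, hAG⟩ := Finset.mem_erase.mp hA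
      obtain ⟨hAF, hAchain⟩ := hGsub A hAG
      have htwle : tw n k A ≤ tw n k A₀ := hmax A hAG
      rcases chain_nested hAchain hA₀chain hAne with hss | hss
      · have hieq : i A = (A, A₀) := by rw [hi]; simp [hss]
        rw [hieq]
        constructor
        · rw [hPσ, Finset.mem_filter]
          exact ⟨Finset.mem_product.mpr ⟨hAF, hA₀F⟩, hss,
            fun h => hA₀props.2 h.2, hAchain, hA₀chain⟩
        · exact min_eq_left htwle
      · have hins : ¬ (A ⊂ A₀) := fun h => ssubset_irrefl A (h.trans hss)
        have hieq : i A = (A₀, A) := by rw [hi]; simp [hins]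
        rw [hieq]
        constructor
        · rw [hPσ, Finset.mem_filter]
          exact ⟨Finset.mem_product.mpr ⟨hA₀F, hAF⟩, hss,
            fun h => hA₀props.1 h.1, hA₀chain, hAchain⟩
        · exact min_eq_right htwle
    have hinj : ∀ x ∈ G.erase A₀, ∀ y ∈ G.erase A₀, i x = i y → x = y := by
      intro x hx y hy hxy
      have hxne : x ≠ A₀ := (Finset.mem_erase.mp hx).1
      have hyne : y ≠ A₀ := (Finset.mem_erase.mp hy).1
      rw [hi] at hxy
      by_cases h1 : x ⊂ A₀ <;> by_cases h2 : y ⊂ A₀ <;>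
        simp only [h1, h2, if_pos, if_neg, if_true, if_false, Prod.mk.injEq] at hxy
      · exact hxy.1
      · exact absurd hxy.1 hxne
      · exact absurd hxy.1.symm hyne
      · exact hxy.2
    have hstep : ∑ A ∈ G.erase A₀, tw n k A
        = ∑ p ∈ (G.erase A₀).image i, min (tw n k p.1) (tw n k p.2) := by
      rw [Finset.sum_image hinj]
      exact (Finset.sum_congr rfl (fun A hA => (hkey A hA).2)).symm
    have himsub : (G.erase A₀).image i ⊆ Pσ := by
      intro p hp
      obtain ⟨A, hA, rfl⟩ := Finset.mem_image.mp hp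
      exact (hkey A hA).1
    have hfinal : ∑ p ∈ (G.erase A₀).image i, min (tw n k p.1) (tw n k p.2)
        ≤ ∑ p ∈ Pσ, min (tw n k p.1) (tw n k p.2) :=
      Finset.sum_le_sum_of_subset_of_nonneg himsub (fun p _ _ => hpair_nonneg p)
    linarith [hstep ▸ hfinal]


/-- Global counting: summing the chain inequality over all permutations. -/
lemma global_ineq (n k : ℕ) (hkn : k ≤ n) (hn0 : 0 < n) (F : Finset (Finset (Fin n)))
    (hcap : capR n k ≤ 1/2) :
    wkFam n k F * (n.factorial : ℝ) ≤ (n.factorial : ℝ)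
      + ∑ p ∈ (F ×ˢ F).filter (fun p => p.1 ⊂ p.2 ∧ ¬(p.1 = ∅ ∧ p.2 = Finset.univ)),
          min (tw n k p.1) (tw n k p.2) *
            ((Finset.univ.filter (fun σ : Equiv.Perm (Fin n) =>
              onChain σ p.1 ∧ onChain σ p.2)).card : ℝ) := by
  set P := (F ×ˢ F).filter (fun p => p.1 ⊂ p.2 ∧ ¬(p.1 = ∅ ∧ p.2 = Finset.univ)) with hP
  have hsum := Finset.sum_le_sum
    (fun (σ : Equiv.Perm (Fin n)) (_ : σ ∈ Finset.univ) => chain_ineq n k hkn hn0 F σ hcap)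
  -- LHS rewrite
  have hL : ∑ σ : Equiv.Perm (Fin n), ∑ A ∈ F.filter (fun A => onChain σ A), tw n k A
      = wkFam n k F * (n.factorial : ℝ) := by
    have h1 : ∀ σ : Equiv.Perm (Fin n), ∑ A ∈ F.filter (fun A => onChain σ A), tw n k A
        = ∑ A ∈ F, if onChain σ A then tw n k A else 0 := fun σ => Finset.sum_filter _ _
    rw [Finset.sum_congr rfl (fun σ _ => h1 σ), Finset.sum_comm]
    have h2 : ∀ A ∈ F, ∑ σ : Equiv.Perm (Fin n), (if onChain σ A then tw n k A else 0)
        = wk n k A * (n.factorial : ℝ) := by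
      intro A _
      rw [← Finset.sum_filter, Finset.sum_const, nsmul_eq_mul]
      have hcount := count_one A
      have hcast : ((Finset.univ.filter (fun σ : Equiv.Perm (Fin n) => onChain σ A)).card : ℝ)
          * (n.choose A.card : ℝ) = (n.factorial : ℝ) := by exact_mod_cast congrArg Nat.cast hcount
      rw [tw]
      calc ((Finset.univ.filter (fun σ : Equiv.Perm (Fin n) => onChain σ A)).card : ℝ)
          * ((n.choose A.card : ℝ) * wk n k A)
          = (((Finset.univ.filter (fun σ : Equiv.Perm (Fin n) => onChain σ A)).card : ℝ)
            * (n.choose A.card : ℝ)) * wk n k A := by ring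
        _ = (n.factorial : ℝ) * wk n k A := by rw [hcast]
        _ = wk n k A * (n.factorial : ℝ) := by ring
    rw [Finset.sum_congr rfl h2, ← Finset.sum_mul, wkFam]
  -- RHS rewrite
  have hR : ∑ σ : Equiv.Perm (Fin n), (1 + ∑ p ∈ (F ×ˢ F).filter
        (fun p => p.1 ⊂ p.2 ∧ ¬(p.1 = ∅ ∧ p.2 = Finset.univ)
          ∧ onChain σ p.1 ∧ onChain σ p.2), min (tw n k p.1) (tw n k p.2))
      = (n.factorial : ℝ) + ∑ p ∈ P, min (tw n k p.1) (tw n k p.2) *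
          ((Finset.univ.filter (fun σ : Equiv.Perm (Fin n) =>
            onChain σ p.1 ∧ onChain σ p.2)).card : ℝ) := by
    rw [Finset.sum_add_distrib, Finset.sum_const, Finset.card_univ, Fintype.card_perm,
      Fintype.card_fin, nsmul_eq_mul, mul_one]
    congr 1
    have h1 : ∀ σ : Equiv.Perm (Fin n), ∑ p ∈ (F ×ˢ F).filter
          (fun p => p.1 ⊂ p.2 ∧ ¬(p.1 = ∅ ∧ p.2 = Finset.univ)
            ∧ onChain σ p.1 ∧ onChain σ p.2), min (tw n k p.1) (tw n k p.2)
        = ∑ p ∈ P, if onChain σ p.1 ∧ onChain σ p.2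
            then min (tw n k p.1) (tw n k p.2) else 0 := by
      intro σ
      rw [hP, ← Finset.sum_filter, Finset.filter_filter]
      congr 1
      apply Finset.filter_congr
      intro p _
      tauto
    rw [Finset.sum_congr rfl (fun σ _ => h1 σ), Finset.sum_comm]
    refine Finset.sum_congr rfl (fun p _ => ?_)
    rw [← Finset.sum_filter, Finset.sum_const, nsmul_eq_mul, mul_comm]
  calc wkFam n k F * (n.factorial : ℝ)
      = ∑ σ : Equiv.Perm (Fin n), ∑ A ∈ F.filter (fun A => onChain σ A), tw n k A := hL.symm
    _ ≤ _ := hsum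
    _ = _ := hR

/-- Per-pair coefficient bound. -/
lemma pair_bound (n k : ℕ) (hk2 : 2 ≤ k) (hkn : 8 * k ≤ n) (A B : Finset (Fin n))
    (hAB : A ⊂ B) (hbad : ¬(A = ∅ ∧ B = Finset.univ)) :
    min (tw n k A) (tw n k B) *
      ((Finset.univ.filter (fun σ : Equiv.Perm (Fin n) =>
        onChain σ A ∧ onChain σ B)).card : ℝ)
    ≤ 2 * capR n k / ((n:ℝ) - k) * (n.factorial : ℝ) := by
  have hkn' : k ≤ n := by omega
  have hn0 : 0 < n := by omega
  have hnk_pos : (0:ℝ) < (n:ℝ) - k := by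
    have : (k:ℝ) < n := by exact_mod_cast (by omega : k < n)
    linarith
  have hcappos := capR_pos (n := n) (k := k) hkn'
  set a := A.card with ha
  set b := B.card with hb
  have hab : a < b := Finset.card_lt_card hAB
  have hbn : b ≤ n := by simpa [hb] using B.card_le_univ
  have han : a ≤ n := by omega
  have hcnt := count_two A B hAB.subset
  have hcast : ((Finset.univ.filter (fun σ : Equiv.Perm (Fin n) =>
      onChain σ A ∧ onChain σ B)).card : ℝ) * ((n.choose b * b.choose a : ℕ) : ℝ)
      = (n.factorial : ℝ) := by exact_mod_cast congrArg Nat.cast hcnt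
  have hCCpos : (0:ℝ) < ((n.choose b * b.choose a : ℕ) : ℝ) := by
    have h1 : 0 < n.choose b := Nat.choose_pos hbn
    have h2 : 0 < b.choose a := Nat.choose_pos hab.le
    exact_mod_cast Nat.mul_pos h1 h2
  -- Key reduction: it suffices to bound min by the coefficient times CC
  suffices hsuff : min (tw n k A) (tw n k B)
      ≤ 2 * capR n k / ((n:ℝ) - k) * ((n.choose b * b.choose a : ℕ) : ℝ) by
    have hcnt_nonneg : (0:ℝ) ≤ ((Finset.univ.filter (fun σ : Equiv.Perm (Fin n) =>
        onChain σ A ∧ onChain σ B)).card : ℝ) := Nat.cast_nonneg _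
    calc min (tw n k A) (tw n k B) * _ ≤ (2 * capR n k / ((n:ℝ) - k)
          * ((n.choose b * b.choose a : ℕ) : ℝ)) *
          ((Finset.univ.filter (fun σ : Equiv.Perm (Fin n) =>
            onChain σ A ∧ onChain σ B)).card : ℝ) :=
          mul_le_mul_of_nonneg_right hsuff hcnt_nonneg
      _ = 2 * capR n k / ((n:ℝ) - k) * (n.factorial : ℝ) := by
          rw [mul_assoc, mul_comm ((n.choose b * b.choose a : ℕ) : ℝ), hcast]
  -- now the pure binomial inequality
  -- generic pattern: find M with min ≤ M * capR and ((n-k)/2) * M ≤ CC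
  have pattern : ∀ M : ℝ, 0 ≤ M → min (tw n k A) (tw n k B) ≤ M * capR n k →
      ((n:ℝ) - k)/2 * M ≤ ((n.choose b * b.choose a : ℕ) : ℝ) →
      min (tw n k A) (tw n k B)
        ≤ 2 * capR n k / ((n:ℝ) - k) * ((n.choose b * b.choose a : ℕ) : ℝ) := by
    intro M hM0 hmin hCC
    have heq : M * capR n k = 2 * capR n k / ((n:ℝ) - k) * (((n:ℝ) - k)/2 * M) := by
      field_simp
    have hcoef : (0:ℝ) ≤ 2 * capR n k / ((n:ℝ) - k) :=
      div_nonneg (by linarith) (by linarith)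
    calc min (tw n k A) (tw n k B) ≤ M * capR n k := hmin
      _ = 2 * capR n k / ((n:ℝ) - k) * (((n:ℝ) - k)/2 * M) := heq
      _ ≤ 2 * capR n k / ((n:ℝ) - k) * ((n.choose b * b.choose a : ℕ) : ℝ) :=
          mul_le_mul_of_nonneg_left hCC hcoef
  by_cases hbtop : b = n
  · -- B = univ, so A ≠ ∅, i.e. 1 ≤ a < n
    have hBuniv : B = Finset.univ := by
      apply Finset.eq_univ_of_card
      rw [← hb, hbtop, Fintype.card_fin]
    have hAne : A ≠ ∅ := fun h => hbad ⟨h, hBuniv⟩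
    have ha1 : 1 ≤ a := by
      rcases Nat.eq_zero_or_pos a with h | h
      · exact absurd (Finset.card_eq_zero.mp (ha ▸ h.symm ▸ rfl : A.card = 0)) hAne
      · exact h
    have han' : a < n := by omega
    refine pattern 1 zero_le_one ?_ ?_
    · have : tw n k B = capR n k := tw_extreme hkn' (Or.inr (hb ▸ hbtop : B.card = n)) (by
        have h2 : (2:ℝ) ≤ (n.choose ((n-k)/2) : ℝ) := by
          have := le_choose n ((n-k)/2) (by omega) (by omega)
          exact_mod_cast le_trans (by omega : 2 ≤ n) this
        rw [capR]
        rw [inv_le_one_iff₀]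
        right; linarith)
      rw [one_mul, ← this]
      exact min_le_right _ _
    · have h1 : n ≤ n.choose a := le_choose n a ha1 han'
      have h2 : n.choose b * b.choose a = n.choose a := by
        rw [hbtop, Nat.choose_self, one_mul]
      rw [h2]
      have : (n:ℝ) ≤ (n.choose a : ℝ) := by exact_mod_cast h1
      linarith
  · have hbn' : b < n := by omega
    by_cases hcase : (n:ℝ) - k ≤ 2 * ((n:ℝ) - a)
    · -- low/middle a : use t_A ≤ C(n,a) * cap and C(n-a, b-a) ≥ n-a
      refine pattern (n.choose a : ℝ) (Nat.cast_nonneg _) ?_ ?_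
      · exact le_trans (min_le_left _ _) (tw_le_choose_mul A)
      · have hid : n.choose b * b.choose a = n.choose a * (n-a).choose (b-a) :=
          Nat.choose_mul hab.le
        have hch : n - a ≤ (n-a).choose (b-a) := le_choose (n-a) (b-a) (by omega) (by omega)
        have hna : ((n:ℝ) - k)/2 ≤ ((n - a : ℕ) : ℝ) := by
          have : ((n - a : ℕ) : ℝ) = (n:ℝ) - a := by
            push_cast [Nat.cast_sub han]; ring
          rw [this]; linarith
        have hch' : ((n - a : ℕ) : ℝ) ≤ ((n-a).choose (b-a) : ℝ) := by exact_mod_cast hch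
        have hchoosea : (0:ℝ) ≤ (n.choose a : ℝ) := Nat.cast_nonneg _
        calc ((n:ℝ) - k)/2 * (n.choose a : ℝ)
            ≤ ((n-a).choose (b-a) : ℝ) * (n.choose a : ℝ) := by nlinarith
          _ = ((n.choose b * b.choose a : ℕ) : ℝ) := by
              rw [hid]; push_cast; ring
    · -- high a : use t_B ≤ C(n,b) * cap and C(b,a) ≥ b
      push_neg at hcase
      have ha1 : 1 ≤ a := by
        by_contra h
        have : a = 0 := by omega
        rw [this] at hcase
        simp only [Nat.cast_zero, sub_zero] at hcase
        have : (k:ℝ) ≥ 0 := Nat.cast_nonneg _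
        have hnn : (0:ℝ) ≤ (n:ℝ) := Nat.cast_nonneg _
        linarith
      refine pattern (n.choose b : ℝ) (Nat.cast_nonneg _) ?_ ?_
      · exact le_trans (min_le_right _ _) (tw_le_choose_mul B)
      · have hch : b ≤ b.choose a := le_choose b a ha1 hab
        have h2a : (n:ℝ) + k < 2 * a := by linarith
        have hblow : ((n:ℝ) - k)/2 ≤ (b : ℝ) := by
          have hba : (a:ℝ) + 1 ≤ b := by exact_mod_cast hab
          have hk0 : (0:ℝ) ≤ k := Nat.cast_nonneg _
          linarith
        have hch' : (b : ℝ) ≤ (b.choose a : ℝ) := by exact_mod_cast hch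
        have hcb : (0:ℝ) ≤ (n.choose b : ℝ) := Nat.cast_nonneg _
        calc ((n:ℝ) - k)/2 * (n.choose b : ℝ) ≤ (b.choose a : ℝ) * (n.choose b : ℝ) := by
              nlinarith
          _ = ((n.choose b * b.choose a : ℕ) : ℝ) := by push_cast; ring


/-- The central binomial coefficient is within `1+δ/2` of `C(n, (n-k)/2)`. -/
lemma capN_bound (n k : ℕ) (δ : ℝ) (hk2 : 2 ≤ k) (hδ0 : 0 < δ) (hδ1 : δ ≤ 1)
    (hnk : 100 * k ≤ n) (hnδ : 800 * (k:ℝ)^2 ≤ δ^3 * n) :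
    (n.choose (n/2) : ℝ) ≤ (1 + δ/2) * (n.choose ((n-k)/2) : ℝ) := by
  have hkn : k ≤ n := by omega
  set m := (n - k) / 2 with hm
  set j := n / 2 - m with hj
  have hmj : m + j = n / 2 := by omega
  have hjk : j ≤ k := by omega
  have hchain := choose_ratio_pow n k hkn j
  rw [hmj] at hchain
  -- cast to ℝ
  have hd_pos : (0:ℝ) < ((n - k + 1 : ℕ) : ℝ) ^ j := by positivity
  have hcast : (n.choose (n/2) : ℝ) * ((n - k + 1 : ℕ) : ℝ) ^ j
      ≤ (n.choose m : ℝ) * ((n + k + 1 : ℕ) : ℝ) ^ j := by exact_mod_cast hchain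
  set x : ℝ := 2 * k / ((n:ℝ) - k + 1) with hx
  have hnk1_pos : (0:ℝ) < (n:ℝ) - k + 1 := by
    have : (k:ℝ) ≤ n := by exact_mod_cast hkn
    linarith
  have hx0 : 0 ≤ x := by
    rw [hx]
    exact div_nonneg (by positivity) (le_of_lt hnk1_pos)
  have hcast1 : ((n - k + 1 : ℕ) : ℝ) = (n:ℝ) - k + 1 := by
    push_cast [Nat.cast_sub hkn]; ring
  have hcast2 : ((n + k + 1 : ℕ) : ℝ) = (n:ℝ) + k + 1 := by push_cast; ring
  have hratio : ((n:ℝ) + k + 1) = ((n:ℝ) - k + 1) * (1 + x) := by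
    rw [hx]
    field_simp
    ring
  have h1 : (n.choose (n/2) : ℝ) ≤ (n.choose m : ℝ) * (1 + x) ^ j := by
    rw [hcast1, hcast2] at hcast
    rw [hratio, mul_pow] at hcast
    have hp : (0:ℝ) < ((n:ℝ) - k + 1) ^ j := by positivity
    have hre : (n.choose m : ℝ) * (((n:ℝ) - k + 1) ^ j * (1 + x) ^ j)
        = ((n.choose m : ℝ) * (1 + x) ^ j) * ((n:ℝ) - k + 1) ^ j := by ring
    rw [hre] at hcast
    exact (mul_le_mul_iff_of_pos_right hp).mp hcast
  have hkr : (2:ℝ) ≤ (k:ℝ) := by exact_mod_cast hk2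
  have hnr : (100:ℝ) * k ≤ n := by exact_mod_cast hnk
  have hxval : 2 * (k:ℝ) * x = 4 * (k:ℝ)^2 / ((n:ℝ) - k + 1) := by
    rw [hx]; field_simp; ring
  have hδ31 : δ^3 ≤ 1 := pow_le_one₀ hδ0.le hδ1
  have hδ3n : δ^3 * (n:ℝ) ≤ (n:ℝ) := by
    have := mul_le_mul_of_nonneg_right hδ31 (Nat.cast_nonneg (α := ℝ) n)
    linarith
  have h800 : 800 * (k:ℝ)^2 ≤ n := by linarith
  have h2kx : 2 * (k:ℝ) * x ≤ 1 := by
    rw [hxval, div_le_one hnk1_pos]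
    linarith [sq_nonneg (k:ℝ)]
  have hpowmono : (1 + x) ^ j ≤ (1 + x) ^ k :=
    pow_le_pow_right₀ (by linarith) hjk
  have hbern : (1 + x) ^ k ≤ 1 + 2 * k * x := pow_one_add_le x hx0 k h2kx
  have hfin : 1 + 2 * (k:ℝ) * x ≤ 1 + δ/2 := by
    have hδ3δ : δ^3 ≤ δ := by nlinarith [sq_nonneg δ]
    have hδn : 800 * (k:ℝ)^2 ≤ δ * n := by
      have := mul_le_mul_of_nonneg_right hδ3δ (Nat.cast_nonneg (α := ℝ) n)
      linarith
    have hQl : δ * (k:ℝ) ≤ δ * ((n:ℝ)/100) :=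
      mul_le_mul_of_nonneg_left (by linarith) hδ0.le
    have : 2 * (k:ℝ) * x ≤ δ/2 := by
      rw [hxval, div_le_iff₀ hnk1_pos]
      linarith [sq_nonneg (k:ℝ)]
    linarith
  have hCm : (0:ℝ) ≤ (n.choose m : ℝ) := Nat.cast_nonneg _
  calc (n.choose (n/2) : ℝ) ≤ (n.choose m : ℝ) * (1 + x) ^ j := h1
    _ ≤ (n.choose m : ℝ) * (1 + 2 * k * x) :=
        mul_le_mul_of_nonneg_left (hpowmono.trans hbern) hCm
    _ ≤ (n.choose m : ℝ) * (1 + δ/2) := mul_le_mul_of_nonneg_left hfin hCm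
    _ = (1 + δ/2) * (n.choose m : ℝ) := mul_comm _ _

end SupersatAux

set_option maxHeartbeats 1000000 in
/-- Supersaturation: there is a constant `C > 1` such that for every
`δ ∈ (0, 1/2)` and integers `k ≥ 2`, `n ≥ C·δ⁻³·k²`, any family `𝓕 ⊆ 2^[n]` with
`w_k(𝓕) ≥ 1 + r·C(n,⌊n/2⌋)⁻¹` has at least `(1/2 - δ)·r·n` comparable pairs. -/
theorem supersaturation_weighted :
    ∃ C : ℝ, 1 < C ∧ ∀ δ : ℝ, δ ∈ Set.Ioo (0 : ℝ) (1 / 2) →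
      ∀ n k : ℕ, 2 ≤ k → C * δ⁻¹ ^ 3 * (k : ℝ) ^ 2 ≤ (n : ℝ) →
        ∀ F : Finset (Finset (Fin n)), ∀ r : ℝ,
          1 + r * ((n.choose (n / 2) : ℝ))⁻¹ ≤ wkFam n k F →
          (1 / 2 - δ) * r * (n : ℝ) ≤ (cpairs F : ℝ) := by
  refine ⟨800, by norm_num, ?_⟩
  rintro δ ⟨hδ0, hδ2⟩ n k hk2 hCn F r hW
  have hδ1 : δ ≤ 1 := by linarith
  have hkr : (2:ℝ) ≤ (k:ℝ) := by exact_mod_cast hk2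
  have hδinv2 : (2:ℝ) ≤ δ⁻¹ := by
    rw [← one_div]
    rw [le_div_iff₀ hδ0]
    linarith
  have hδinv3 : (8:ℝ) ≤ δ⁻¹^3 := by
    have h := pow_le_pow_left₀ (by norm_num : (0:ℝ) ≤ 2) hδinv2 3
    norm_num at h
    rw [← inv_pow] at h
    exact h
  have hksq : (0:ℝ) ≤ (k:ℝ)^2 := sq_nonneg _
  have hn6400 : 6400 * (k:ℝ)^2 ≤ n := by nlinarith
  have hnk100 : 100 * k ≤ n := by
    have h1 : (100:ℝ) * k ≤ 6400 * (k:ℝ)^2 := by nlinarith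
    have : ((100 * k : ℕ) : ℝ) ≤ (n : ℝ) := by push_cast; linarith
    exact_mod_cast this
  have hkn : k ≤ n := by omega
  have hn0 : 0 < n := by omega
  have hkn8 : 8 * k ≤ n := by omega
  -- δ³ n ≥ 800 k²
  have hδ3pos : (0:ℝ) < δ^3 := pow_pos hδ0 3
  have hnδ : 800 * (k:ℝ)^2 ≤ δ^3 * n := by
    have h1 := mul_le_mul_of_nonneg_left hCn hδ3pos.le
    have h2 : δ^3 * (800 * δ⁻¹^3 * (k:ℝ)^2) = 800 * (k:ℝ)^2 := by
      field_simp
    rw [h2] at h1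
    linarith
  -- cap bounds
  set m := (n - k) / 2 with hm
  have hm1 : 1 ≤ m := by omega
  have hmn : m < n := by omega
  have hchm : (n:ℝ) ≤ (n.choose m : ℝ) := by exact_mod_cast le_choose n m hm1 hmn
  have hchm_pos : (0:ℝ) < (n.choose m : ℝ) := by
    have : (0:ℝ) < (n:ℝ) := by exact_mod_cast hn0
    linarith
  have hcap_half : capR n k ≤ 1/2 := by
    rw [capR, ← hm]
    have h2 : (2:ℝ) ≤ (n.choose m : ℝ) := by
      have : (2:ℝ) ≤ (n:ℝ) := by exact_mod_cast (by omega : 2 ≤ n)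
      linarith
    calc ((n.choose m : ℝ))⁻¹ ≤ (2:ℝ)⁻¹ := inv_anti₀ (by norm_num) h2
      _ = 1/2 := by norm_num
  have hcap_pos : 0 < capR n k := capR_pos hkn
  -- main inequality
  set P := (F ×ˢ F).filter (fun p => p.1 ⊂ p.2 ∧ ¬(p.1 = ∅ ∧ p.2 = Finset.univ)) with hP
  have hglobal := global_ineq n k hkn hn0 F hcap_half
  have hnkpos : (0:ℝ) < (n:ℝ) - k := by
    have h1 : (k:ℝ) < n := by exact_mod_cast (by omega : k < n)
    linarith
  have hKconst : (0:ℝ) ≤ 2 * capR n k / ((n:ℝ) - k) := by positivity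
  have hpairsum : ∑ p ∈ P, min (tw n k p.1) (tw n k p.2) *
      ((Finset.univ.filter (fun σ : Equiv.Perm (Fin n) =>
        onChain σ p.1 ∧ onChain σ p.2)).card : ℝ)
      ≤ (P.card : ℝ) * (2 * capR n k / ((n:ℝ) - k) * (n.factorial : ℝ)) := by
    rw [← nsmul_eq_mul]
    apply Finset.sum_le_card_nsmul
    intro p hp
    rw [hP, Finset.mem_filter] at hp
    exact pair_bound n k hk2 hkn8 p.1 p.2 hp.2.1 hp.2.2
  have hfact_pos : (0:ℝ) < (n.factorial : ℝ) := by exact_mod_cast n.factorial_pos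
  have hWle : wkFam n k F ≤ 1 + (P.card : ℝ) * (2 * capR n k / ((n:ℝ) - k)) := by
    have h1 : wkFam n k F * (n.factorial : ℝ)
        ≤ (1 + (P.card : ℝ) * (2 * capR n k / ((n:ℝ) - k))) * (n.factorial : ℝ) := by
      calc wkFam n k F * (n.factorial : ℝ) ≤ _ := hglobal
        _ ≤ (n.factorial : ℝ) + (P.card : ℝ) * (2 * capR n k / ((n:ℝ) - k)
              * (n.factorial : ℝ)) := by
            rw [← hP]; linarith [hpairsum]
        _ = (1 + (P.card : ℝ) * (2 * capR n k / ((n:ℝ) - k))) * (n.factorial : ℝ) := by ring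
    exact (mul_le_mul_iff_of_pos_right hfact_pos).mp h1
  have hPcard : (P.card : ℝ) ≤ (cpairs F : ℝ) := by
    have hsub : P ⊆ (F ×ˢ F).filter (fun p => p.1 ⊂ p.2) := by
      rw [hP]
      intro p hp
      rw [Finset.mem_filter] at hp ⊢
      exact ⟨hp.1, hp.2.1⟩
    exact_mod_cast Finset.card_le_card hsub
  set cp : ℝ := (cpairs F : ℝ) with hcp
  have hcp0 : (0:ℝ) ≤ cp := Nat.cast_nonneg _
  have hWle2 : wkFam n k F ≤ 1 + cp * (2 * capR n k / ((n:ℝ) - k)) := by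
    have := mul_le_mul_of_nonneg_right hPcard hKconst
    linarith
  set N : ℝ := (n.choose (n/2) : ℝ) with hN
  have hN_pos : (0:ℝ) < N := by
    rw [hN]; exact_mod_cast Nat.choose_pos (Nat.div_le_self n 2)
  have hrN : r * N⁻¹ ≤ cp * (2 * capR n k / ((n:ℝ) - k)) := by linarith
  have hr_le : r ≤ cp * (2 * (N * capR n k) / ((n:ℝ) - k)) := by
    have h1 := mul_le_mul_of_nonneg_left hrN hN_pos.le
    have h2 : N * (r * N⁻¹) = r := by field_simp
    rw [h2] at h1
    calc r ≤ N * (cp * (2 * capR n k / ((n:ℝ) - k))) := h1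
      _ = cp * (2 * (N * capR n k) / ((n:ℝ) - k)) := by ring
  -- N * capR ≤ 1 + δ/2
  have hNcap : N * capR n k ≤ 1 + δ/2 := by
    have h1 := capN_bound n k δ hk2 hδ0 hδ1 hnk100 hnδ
    rw [← hm, ← hN] at h1
    rw [capR, ← hm]
    rw [← div_le_iff₀ hchm_pos] at h1
    calc N * ((n.choose m : ℝ))⁻¹ = N / (n.choose m : ℝ) := by ring
      _ ≤ 1 + δ/2 := h1
  have hr_le2 : r ≤ cp * (2 * (1 + δ/2) / ((n:ℝ) - k)) := by
    have hmono : 2 * (N * capR n k) / ((n:ℝ) - k) ≤ 2 * (1 + δ/2) / ((n:ℝ) - k) := by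
      rw [div_le_div_iff₀ hnkpos hnkpos]
      nlinarith
    calc r ≤ cp * (2 * (N * capR n k) / ((n:ℝ) - k)) := hr_le
      _ ≤ cp * (2 * (1 + δ/2) / ((n:ℝ) - k)) := mul_le_mul_of_nonneg_left hmono hcp0
  -- endgame
  rcases le_or_gt r 0 with hr | hr
  · have h1 : (0:ℝ) ≤ (1/2 - δ) := by linarith
    have h2 : (0:ℝ) ≤ (n:ℝ) := Nat.cast_nonneg _
    have : (1/2 - δ) * r * n ≤ 0 := by
      apply mul_nonpos_of_nonpos_of_nonneg ?_ h2
      exact mul_nonpos_of_nonneg_of_nonpos h1 hr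
    linarith
  · -- r > 0
    have hkdn : (k:ℝ) ≤ δ * n := by
      have hδ3δ : δ^3 ≤ δ := by nlinarith [sq_nonneg δ]
      have hδn : 800 * (k:ℝ)^2 ≤ δ * n := by
        have := mul_le_mul_of_nonneg_right (show δ^3 ≤ δ by nlinarith [sq_nonneg δ])
          (Nat.cast_nonneg (α := ℝ) n)
        nlinarith
      nlinarith
    have hmul : r * ((n:ℝ) - k) ≤ (2 + δ) * cp := by
      have h1 := mul_le_mul_of_nonneg_right hr_le2 (le_of_lt hnkpos)
      have h2 : cp * (2 * (1 + δ/2) / ((n:ℝ) - k)) * ((n:ℝ) - k) = (2 + δ) * cp := by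
        field_simp
      rw [h2] at h1
      exact h1
    -- (1/2 - δ) * (2 + δ) * n ≤ n - k  since k ≤ δ n
    have hrpos : (0:ℝ) < r := hr
    have h1 : r * (k:ℝ) ≤ r * (δ * n) := mul_le_mul_of_nonneg_left hkdn hrpos.le
    have h3 : (0:ℝ) ≤ δ^2 * r * (n:ℝ) := by positivity
    have h4 : (0:ℝ) ≤ r * (k:ℝ) := mul_nonneg hrpos.le (Nat.cast_nonneg _)
    have key : (2+δ) * ((1/2-δ)*r*(n:ℝ)) ≤ (2+δ) * cp := by nlinarith
    exact le_of_mul_le_mul_left key (by linarith : (0:ℝ) < 2+δ)
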